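/- Let T > 0, a > 0, σ > 0. Suppose f : [0,∞) → [0,∞) is absolutely continuous and T-periodic, g, h : [0,∞) → [0,∞) are T-periodic with ∫₀ᵀ g(s) ds ≤ α and ∫₀ᵀ h(s) ds ≤ β, and for all 0 ≤ t₀ < t we have f(t) - f(t₀) + a ∫_{t₀}^{t} f(s)^{1+σ} ds ≤ ∫_{t₀}^{t} g(s) f(s) ds + ∫_{t₀}^{t} h(s) ds. Then there exists a constant C depending only on a, α, β, T such that sup_{t∈(0,T)} f(t) + a ∫₀ᵀ f(t)^{1+σ} dt ≤ C. -/

import Mathlib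

open MeasureTheory Set

lemma per_int {g : ℝ → ℝ} {T : ℝ} (hT : 0 < T) (hper : Function.Periodic g T)
    (hint : IntervalIntegrable g volume 0 T) (s t : ℝ) : IntervalIntegrable g volume s t := by
  have step1 : ∀ k : ℤ, IntervalIntegrable g volume (k*T) (k*T + T) := by
    intro k
    have h1 := hint.comp_add_right (-(k*T))
    have h2 : (fun x => g (x + -(k*T))) = g := funext fun x => by
      rw [← sub_eq_add_neg]; exact (hper.int_mul k).sub_eq x
    rw [h2] at h1
    simpa [sub_neg_eq_add, add_comm] using h1
  have step2 : ∀ (m : ℤ) (n : ℕ), IntervalIntegrable g volume (m*T) (((m:ℝ)+n)*T) := by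
    intro m n
    induction n with
    | zero => simpa using IntervalIntegrable.refl (f := g) (μ := volume) (a := (m:ℝ)*T)
    | succ n ih =>
      have key : ((m:ℝ) + (n+1:ℕ))*T = ((m:ℝ)+n)*T + T := by push_cast; ring
      have h3 : ((m:ℝ)+n)*T = ((m+n : ℤ):ℝ)*T := by push_cast; ring
      have h4 := step1 (m+n)
      rw [← h3] at h4
      rw [key]
      exact ih.trans h4
  have main : ∀ s t : ℝ, s ≤ t → IntervalIntegrable g volume s t := by
    intro s t hst
    set m : ℤ := ⌊s/T⌋ with hm
    have hms : (m:ℝ)*T ≤ s := by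
      have := Int.floor_le (s/T)
      calc (m:ℝ)*T ≤ (s/T)*T := by nlinarith
        _ = s := div_mul_cancel₀ s hT.ne'
    set n : ℕ := ⌈(t - m*T)/T⌉₊ with hn
    have hnt : t ≤ ((m:ℝ)+n)*T := by
      have h1 := Nat.le_ceil ((t - m*T)/T)
      have h2 : t - m*T ≤ n*T := by
        rw [div_le_iff₀ hT] at h1; exact h1
      nlinarith
    have hsub : uIcc s t ⊆ uIcc ((m:ℝ)*T) (((m:ℝ)+n)*T) := by
      rw [uIcc_of_le hst, uIcc_of_le (by nlinarith)]
      exact Icc_subset_Icc hms hnt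
    exact (step2 m n).mono_set hsub
  rcases le_total s t with hst | hts
  · exact main s t hst
  · exact (main t s hts).symm

lemma piece_bound {F g h : ℝ → ℝ} {β : ℝ} (hβ : 0 ≤ β)
    (hF0 : ∀ t, 0 ≤ F t) (hFc : Continuous F)
    (hgi : ∀ s t, IntervalIntegrable g volume s t)
    (hg0 : ∀ t, 0 ≤ g t)
    (hmain : ∀ t₀ t : ℝ, 0 ≤ t₀ → t₀ < t →
      F t - F t₀ ≤ (∫ s in t₀..t, g s * F s) + ∫ s in t₀..t, h s)
    (p q : ℝ) (hp : 0 ≤ p) (hpq : p ≤ q)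
    (hgs : ∀ t ∈ Icc p q, (∫ s in p..t, g s) ≤ 1/2)
    (hhs : ∀ t ∈ Icc p q, (∫ s in p..t, h s) ≤ β) :
    ∀ t ∈ Icc p q, F t ≤ 2 * F p + 2 * β := by
  obtain ⟨w, hw, hwmax⟩ := isCompact_Icc.exists_isMaxOn (nonempty_Icc.2 hpq) hFc.continuousOn
  have hmax : ∀ t ∈ Icc p q, F t ≤ F w := fun t ht => hwmax ht
  have hS : F w ≤ 2 * F p + 2 * β := by
    rcases eq_or_lt_of_le hw.1 with heq | hlt
    · have hFw : F w = F p := by rw [← heq]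
      have := hF0 p
      linarith
    · have h1 := hmain p w hp hlt
      have h2 : (∫ s in p..w, g s * F s) ≤ ∫ s in p..w, g s * F w := by
        apply intervalIntegral.integral_mono_on hw.1
          ((hgi p w).mul_continuousOn hFc.continuousOn) ((hgi p w).mul_const _)
        intro x hx
        exact mul_le_mul_of_nonneg_left (hmax x (Icc_subset_Icc_right hw.2 hx)) (hg0 x)
      have h3 : (∫ s in p..w, g s * F w) = (∫ s in p..w, g s) * F w :=
        intervalIntegral.integral_mul_const _ _
      have h4 : (∫ s in p..w, g s) * F w ≤ (1/2) * F w :=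
        mul_le_mul_of_nonneg_right (hgs w hw) (hF0 w)
      have h5 := hhs w hw
      linarith [hF0 p]
  intro t ht; exact (hmax t ht).trans hS

lemma chain_lemma {s : ℕ → ℝ} (hmono : ∀ i, s i ≤ s (i+1)) :
    ∀ N : ℕ, 0 < N → ∀ t, s 0 ≤ t → t ≤ s N → ∃ i, i < N ∧ s i ≤ t ∧ t ≤ s (i+1) := by
  intro N
  induction N with
  | zero => intro h; exact absurd h (lt_irrefl 0)
  | succ N ih =>
    intro _ t ht0 htN
    rcases Nat.eq_zero_or_pos N with rfl | hN
    · exact ⟨0, Nat.zero_lt_one, ht0, htN⟩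
    rcases le_total t (s N) with hc | hc
    · obtain ⟨i, hi, h1, h2⟩ := ih hN t ht0 hc
      exact ⟨i, Nat.lt_succ_of_lt hi, h1, h2⟩
    · exact ⟨N, Nat.lt_succ_self N, hc, htN⟩

lemma interval_bound {F g h : ℝ → ℝ} {α β T : ℝ} (hT : 0 < T) (hα : 0 ≤ α) (hβ : 0 ≤ β)
    {N : ℕ} (hN1 : 1 ≤ N) (hNα : 2*α ≤ N)
    (hF0 : ∀ t, 0 ≤ F t) (hFc : Continuous F)
    (hgi : ∀ s t, IntervalIntegrable g volume s t)
    (hhi : ∀ s t, IntervalIntegrable h volume s t)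
    (hg0 : ∀ t, 0 ≤ g t) (hh0 : ∀ t, 0 ≤ h t)
    (hmain : ∀ t₀ t : ℝ, 0 ≤ t₀ → t₀ < t →
      F t - F t₀ ≤ (∫ s in t₀..t, g s * F s) + ∫ s in t₀..t, h s)
    (u : ℝ) (hu : 0 ≤ u)
    (hgT : (∫ s in u..u+T, g s) ≤ α)
    (hhT : (∫ s in u..u+T, h s) ≤ β) :
    ∀ t ∈ Icc u (u+T), F t ≤ 2^N * (F u + 2*β) := by
  set G : ℝ → ℝ := fun t => ∫ x in u..t, g x with hG
  have hGc : Continuous G := intervalIntegral.continuous_primitive hgi u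
  have hGsplit : ∀ s t : ℝ, (∫ x in s..t, g x) = G t - G s := by
    intro s t
    have h2 := intervalIntegral.integral_add_adjacent_intervals (hgi u s) (hgi s t)
    show (∫ x in s..t, g x) = (∫ x in u..t, g x) - ∫ x in u..s, g x
    linarith
  have hGmono : Monotone G := by
    intro s t hst
    have h0 : 0 ≤ ∫ x in s..t, g x := intervalIntegral.integral_nonneg hst (fun x _ => hg0 x)
    have h1 := hGsplit s t
    simp only [hG] at h1 ⊢
    linarith
  have hGu : G u = 0 := intervalIntegral.integral_same
  have hGmax0 : 0 ≤ G (u+T) := by rw [← hGu]; exact hGmono (by linarith)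
  set c : ℝ := G (u+T) / N with hc
  have hNpos : (0:ℝ) < N := by exact_mod_cast hN1
  have hc0 : 0 ≤ c := div_nonneg hGmax0 hNpos.le
  have hchalf : c ≤ 1/2 := by
    rw [hc, div_le_iff₀ hNpos]
    nlinarith [hgT]
  have hNc : (N:ℝ) * c = G (u+T) := by rw [hc]; field_simp
  set D : ℕ → Set ℝ := fun i => Icc u (u+T) ∩ {t | G t ≤ i * c} with hD
  have hDclosed : ∀ i, IsClosed (D i) := fun i =>
    isClosed_Icc.inter (isClosed_le hGc continuous_const)
  have hDne : ∀ i, (D i).Nonempty := fun i =>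
    ⟨u, ⟨le_refl u, by linarith⟩, by
      rw [mem_setOf_eq, hGu]; exact mul_nonneg (Nat.cast_nonneg i) hc0⟩
  have hDbdd : ∀ i, BddAbove (D i) := fun i => bddAbove_Icc.mono inter_subset_left
  set S : ℕ → ℝ := fun i => if i = 0 then u else sSup (D i) with hS
  have hSmem : ∀ i, i ≠ 0 → S i ∈ D i := by
    intro i hi
    show (if i = 0 then u else sSup (D i)) ∈ D i
    rw [if_neg hi]
    exact (hDclosed i).csSup_mem (hDne i) (hDbdd i)
  have hS0 : S 0 = u := by simp [hS]
  have hSIcc : ∀ i, S i ∈ Icc u (u+T) := by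
    intro i; rcases eq_or_ne i 0 with rfl | hi
    · rw [hS0]; exact ⟨le_refl u, by linarith⟩
    · exact (hSmem i hi).1
  have hSGle : ∀ i, i ≠ 0 → G (S i) ≤ i * c := fun i hi => (hSmem i hi).2
  have hSmono : ∀ i, S i ≤ S (i+1) := by
    intro i
    have hmem : S i ∈ D (i+1) := by
      rcases eq_or_ne i 0 with rfl | hi
      · rw [hS0]
        exact ⟨⟨le_refl u, by linarith⟩, by
          rw [mem_setOf_eq, hGu]; exact mul_nonneg (Nat.cast_nonneg _) hc0⟩
      · refine ⟨(hSmem i hi).1, ?_⟩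
        rw [mem_setOf_eq]
        have h1 := hSGle i hi
        have h2 : (i:ℝ)*c ≤ ((i+1:ℕ):ℝ)*c := by
          push_cast; nlinarith
        linarith
    have h3 : S i ≤ sSup (D (i+1)) := le_csSup (hDbdd (i+1)) hmem
    show S i ≤ (if i+1 = 0 then u else sSup (D (i+1)))
    rw [if_neg (Nat.succ_ne_zero i)]
    exact h3
  have hSN : S N = u + T := by
    have hne : N ≠ 0 := by omega
    have hmem : u + T ∈ D N := ⟨⟨by linarith, le_refl _⟩, by
      rw [mem_setOf_eq]; exact le_of_eq hNc.symm⟩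
    have h1 : sSup (D N) ≤ u + T := csSup_le (hDne N) (fun x hx => hx.1.2)
    have h2 : u + T ≤ sSup (D N) := le_csSup (hDbdd N) hmem
    show (if N = 0 then u else sSup (D N)) = u + T
    rw [if_neg hne]; linarith
  have hpiece : ∀ i, ∀ t ∈ Icc (S i) (S (i+1)), (∫ x in (S i)..t, g x) ≤ 1/2 := by
    intro i t ht
    rw [hGsplit]
    have hup : G t ≤ ((i:ℝ)+1) * c := by
      have h1 : G t ≤ G (S (i+1)) := hGmono ht.2
      have h2 := hSGle (i+1) (Nat.succ_ne_zero i)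
      push_cast at h2
      linarith
    rw [add_mul, one_mul] at hup
    rcases eq_or_ne i 0 with rfl | hi
    · rw [hS0, hGu]
      push_cast at hup
      linarith
    · rcases eq_or_lt_of_le (hSIcc i).2 with heq | hlt
      · have h3 : S (i+1) ≤ S i := by rw [heq]; exact (hSIcc (i+1)).2
        have h4 : t = S i := le_antisymm (ht.2.trans h3) ht.1
        rw [h4]; norm_num
      · have hlow : (i:ℝ) * c ≤ G (S i) := by
          have hev : ∀ᶠ t' in nhdsWithin (S i) (Ioi (S i)), (i:ℝ)*c ≤ G t' := by
            filter_upwards [Ioc_mem_nhdsGT_of_mem ⟨le_refl (S i), hlt⟩] with t' ht'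
            by_contra hcon
            push_neg at hcon
            have hmem : t' ∈ D i := ⟨⟨le_trans (hSIcc i).1 ht'.1.le, ht'.2⟩, le_of_lt hcon⟩
            have h5 : t' ≤ S i := by
              show t' ≤ (if i = 0 then u else sSup (D i))
              rw [if_neg hi]
              exact le_csSup (hDbdd i) hmem
            exact absurd h5 (not_le.2 ht'.1)
          exact ge_of_tendsto (hGc.continuousAt.mono_left nhdsWithin_le_nhds) hev
        linarith
  have hhsub : ∀ p t : ℝ, u ≤ p → p ≤ t → t ≤ u + T → (∫ s in p..t, h s) ≤ β := by
    intro p t h1 h2 h3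
    have e1 := intervalIntegral.integral_add_adjacent_intervals (hhi u p) (hhi p t)
    have e2 := intervalIntegral.integral_add_adjacent_intervals (hhi u t) (hhi t (u+T))
    have n1 : 0 ≤ ∫ s in u..p, h s := intervalIntegral.integral_nonneg h1 (fun x _ => hh0 x)
    have n2 : 0 ≤ ∫ s in t..u+T, h s := intervalIntegral.integral_nonneg h3 (fun x _ => hh0 x)
    linarith [hhT]
  have hrecpiece : ∀ i, ∀ t ∈ Icc (S i) (S (i+1)), F t ≤ 2 * F (S i) + 2*β := by
    intro i
    refine piece_bound hβ hF0 hFc hgi hg0 hmain (S i) (S (i+1))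
      (le_trans hu (hSIcc i).1) (hSmono i) (hpiece i) ?_
    intro t ht
    exact hhsub (S i) t (hSIcc i).1 ht.1 (le_trans ht.2 (hSIcc (i+1)).2)
  have hind : ∀ i, F (S i) ≤ 2^i * (F u + 2*β) - 2*β := by
    intro i; induction i with
    | zero => rw [hS0]; norm_num
    | succ i ih =>
      have h1 := hrecpiece i (S (i+1)) ⟨hSmono i, le_refl _⟩
      have hp : (2:ℝ)^(i+1) * (F u + 2*β) = 2*(2^i*(F u + 2*β)) := by ring
      linarith
  intro t ht
  obtain ⟨i, hiN, h1, h2⟩ := chain_lemma hSmono N (by omega) t (by rw [hS0]; exact ht.1)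
    (by rw [hSN]; exact ht.2)
  have h3 := hrecpiece i t ⟨h1, h2⟩
  have h4 := hind i
  have h5 : (2:ℝ)^(i+1) ≤ 2^N := pow_le_pow_right₀ one_le_two hiN
  have hX : 0 ≤ F u + 2*β := by linarith [hF0 u]
  have h6 : (2:ℝ)^(i+1)*(F u + 2*β) ≤ 2^N*(F u + 2*β) := mul_le_mul_of_nonneg_right h5 hX
  have hp : (2:ℝ)^(i+1) * (F u + 2*β) = 2*(2^i*(F u + 2*β)) := by ring
  linarith

set_option maxHeartbeats 1600000 in
/-- Periodic Gronwall-type inequality (Lemma 2.2, first part).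
The constant `C` depends only on `a, α, β, T` (it is chosen before the functions
`f, g, h`). Absolute continuity of `f` is encoded via the fundamental theorem of
calculus: there is a locally integrable `f'` with `f t - f s = ∫ f'`. -/
theorem stmt_1 (T a σ α β : ℝ) (hT : 0 < T) (ha : 0 < a) (hσ : 0 < σ)
    (hα : 0 ≤ α) (hβ : 0 ≤ β) :
    ∃ C : ℝ, 0 < C ∧
      ∀ f g h f' : ℝ → ℝ,
        (∀ t, 0 ≤ f t) → (∀ t, 0 ≤ g t) → (∀ t, 0 ≤ h t) →
        Function.Periodic f T → Function.Periodic g T → Function.Periodic h T →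
        (∀ s t : ℝ, IntervalIntegrable f' volume s t) →
        (∀ s t : ℝ, f t - f s = ∫ x in s..t, f' x) →
        IntervalIntegrable g volume 0 T →
        IntervalIntegrable h volume 0 T →
        ((∫ s in (0:ℝ)..T, g s) ≤ α) →
        ((∫ s in (0:ℝ)..T, h s) ≤ β) →
        (∀ t₀ t : ℝ, 0 ≤ t₀ → t₀ < t →
          f t - f t₀ + a * ∫ s in t₀..t, (f s) ^ (1 + σ)
            ≤ (∫ s in t₀..t, g s * f s) + ∫ s in t₀..t, h s) →
        (⨆ t ∈ Ioo (0:ℝ) T, f t) + a * ∫ t in (0:ℝ)..T, (f t) ^ (1 + σ) ≤ C := by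
  set N : ℕ := ⌈2*α⌉₊ + 1 with hN
  have hN1 : 1 ≤ N := Nat.le_add_left 1 _
  have hNα : 2*α ≤ N := by
    have h1 := Nat.le_ceil (2*α)
    have h2 : ((⌈2*α⌉₊ : ℕ):ℝ) ≤ N := by rw [hN]; push_cast; linarith
    linarith
  set A : ℝ := 2^N with hA
  have hApos : (0:ℝ) < A := by positivity
  have hαA : 0 ≤ α*A := mul_nonneg hα hApos.le
  set K : ℝ := (α*A + 2*α*A*β + β) / (a*T) with hK
  have hK0 : 0 ≤ K := div_nonneg (by nlinarith [mul_nonneg hαA hβ]) (by positivity)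
  set M : ℝ := max 1 ((2*K)^(1/σ)) with hM
  have hM1 : (1:ℝ) ≤ M := le_max_left _ _
  have hKrel : a*T*K = α*A + 2*α*A*β + β := by
    rw [hK]; field_simp
  have hMge : (2*K)^(1/σ) ≤ M := le_max_right _ _
  clear_value N A K M
  clear hN hK hM
  refine ⟨(1+α)*A*(M+2*β) + β + 1, ?_, ?_⟩
  · have h1 : (0:ℝ) ≤ M + 2*β := by linarith
    have h2 : (0:ℝ) ≤ (1+α)*A := mul_nonneg (by linarith) hApos.le
    nlinarith [mul_nonneg h2 h1]
  intro f g h f' hf0 hg0 hh0 hfper hgper hhper hfi hftc hgint hhint hgα hhβ hmain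
  have hfc : Continuous f := by
    have heq : f = fun t => f 0 + ∫ x in (0:ℝ)..t, f' x := funext fun t => by
      have := hftc 0 t; linarith
    rw [heq]
    exact continuous_const.add (intervalIntegral.continuous_primitive hfi 0)
  have hgall : ∀ s t, IntervalIntegrable g volume s t := per_int hT hgper hgint
  have hhall : ∀ s t, IntervalIntegrable h volume s t := per_int hT hhper hhint
  have hmain' : ∀ t₀ t : ℝ, 0 ≤ t₀ → t₀ < t →
      f t - f t₀ ≤ (∫ s in t₀..t, g s * f s) + ∫ s in t₀..t, h s := by
    intro t₀ t h0 hlt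
    have h1 := hmain t₀ t h0 hlt
    have h2 : 0 ≤ ∫ s in t₀..t, (f s)^(1+σ) :=
      intervalIntegral.integral_nonneg hlt.le (fun x _ => Real.rpow_nonneg (hf0 x) _)
    nlinarith
  obtain ⟨w, hwmem, hwmin⟩ := isCompact_Icc.exists_isMinOn
    (nonempty_Icc.2 hT.le) hfc.continuousOn
  have hwlow : ∀ s ∈ Icc (0:ℝ) T, f w ≤ f s := fun s hs => hwmin hs
  have hgshift : (∫ s in w..w+T, g s) ≤ α := by
    rw [hgper.intervalIntegral_add_eq w 0]
    simpa using hgα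
  have hhshift : (∫ s in w..w+T, h s) ≤ β := by
    rw [hhper.intervalIntegral_add_eq w 0]
    simpa using hhβ
  have hbound := interval_bound hT hα hβ hN1 hNα hf0 hfc hgall hhall hg0 hh0 hmain'
    w hwmem.1 hgshift hhshift
  simp only [← hA] at hbound
  set m := f w with hm
  have hm0 : 0 ≤ m := hf0 w
  set Sstar : ℝ := A * (m + 2*β) with hSstar
  clear_value m Sstar
  have hglobal : ∀ t ∈ Icc (0:ℝ) T, f t ≤ Sstar := by
    intro t ht
    rcases le_total w t with hwt | htw
    · exact hbound t ⟨hwt, by linarith [ht.2, hwmem.1]⟩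
    · have h1 : t + T ∈ Icc w (w+T) := ⟨by linarith [ht.1, hwmem.2], by linarith⟩
      have h2 := hbound (t+T) h1
      rwa [hfper t] at h2
  have hSstar0 : 0 ≤ Sstar := by
    rw [hSstar]; exact mul_nonneg hApos.le (by linarith)
  have hfTf0 : f T = f 0 := by have := hfper 0; rwa [zero_add] at this
  have hstepA := hmain 0 T (le_refl 0) hT
  rw [hfTf0] at hstepA
  have hrint : IntervalIntegrable (fun s => (f s)^(1+σ)) volume 0 T :=
    (hfc.rpow_const (fun x => Or.inr (by linarith))).intervalIntegrable 0 T
  have hgf : (∫ s in (0:ℝ)..T, g s * f s) ≤ α * Sstar := by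
    have h2 : (∫ s in (0:ℝ)..T, g s * f s) ≤ ∫ s in (0:ℝ)..T, g s * Sstar := by
      apply intervalIntegral.integral_mono_on hT.le
        ((hgall 0 T).mul_continuousOn hfc.continuousOn) ((hgall 0 T).mul_const _)
      intro x hx
      exact mul_le_mul_of_nonneg_left (hglobal x hx) (hg0 x)
    have h3 : (∫ s in (0:ℝ)..T, g s * Sstar) = (∫ s in (0:ℝ)..T, g s) * Sstar :=
      intervalIntegral.integral_mul_const _ _
    nlinarith [mul_le_mul_of_nonneg_right hgα hSstar0]
  have hIa : a * (∫ t in (0:ℝ)..T, (f t)^(1+σ)) ≤ α * Sstar + β := by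
    linarith [hhβ]
  have hlowint : T * m^(1+σ) ≤ ∫ t in (0:ℝ)..T, (f t)^(1+σ) := by
    have h1 : (∫ _ in (0:ℝ)..T, m^(1+σ)) ≤ ∫ t in (0:ℝ)..T, (f t)^(1+σ) := by
      apply intervalIntegral.integral_mono_on hT.le intervalIntegrable_const hrint
      intro x hx
      exact Real.rpow_le_rpow hm0 (hwlow x hx) (by linarith)
    rw [intervalIntegral.integral_const] at h1
    rw [smul_eq_mul, sub_zero] at h1
    exact h1
  have hmM : m ≤ M := by
    by_contra hcon
    push_neg at hcon
    have hm1 : 1 < m := lt_of_le_of_lt hM1 hcon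
    have hmain1 : a*T*m^(1+σ) ≤ α*A*m + 2*α*A*β + β := by
      have e1 : a*(T*m^(1+σ)) ≤ a*(∫ t in (0:ℝ)..T, (f t)^(1+σ)) :=
        mul_le_mul_of_nonneg_left hlowint ha.le
      have e2 : α*Sstar = α*A*m + 2*α*A*β := by rw [hSstar]; ring
      have e3 : a*T*m^(1+σ) = a*(T*m^(1+σ)) := by ring
      linarith
    have hstep : m^(1+σ) ≤ K*(m+1) := by
      have haT : 0 < a*T := by positivity
      have key : α*A*m + 2*α*A*β + β ≤ (α*A + 2*α*A*β + β)*(m+1) := by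
        nlinarith [mul_nonneg (mul_nonneg hαA hβ) hm0, mul_nonneg hβ hm0]
      have h6 : (a*T)*(K*(m+1)) = (α*A + 2*α*A*β + β)*(m+1) := by
        rw [← hKrel]; ring
      have h5 : (a*T) * m^(1+σ) ≤ (a*T) * (K*(m+1)) := by linarith
      exact le_of_mul_le_mul_left h5 haT
    have hmpos : (0:ℝ) < m := by linarith
    have hsplit : m^(1+σ) = m * m^σ := by
      rw [Real.rpow_add hmpos, Real.rpow_one]
    have h8 : m^σ ≤ 2*K := by
      have e4 : K*(m+1) ≤ m*(2*K) := by
        nlinarith [mul_nonneg hK0 (by linarith : (0:ℝ) ≤ m - 1)]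
      have h7 : m * m^σ ≤ m * (2*K) := by linarith
      exact le_of_mul_le_mul_left h7 hmpos
    have h9 : 2*K < m^σ := by
      have h2K : (0:ℝ) ≤ 2*K := by linarith
      have h10 : (2*K)^(1/σ) < m := lt_of_le_of_lt hMge hcon
      have h11 := Real.rpow_lt_rpow (Real.rpow_nonneg h2K _) h10 hσ
      rwa [← Real.rpow_mul h2K, one_div, inv_mul_cancel₀ hσ.ne', Real.rpow_one] at h11
    linarith
  have hfin1 : (⨆ t ∈ Ioo (0:ℝ) T, f t) ≤ Sstar := by
    refine Real.iSup_le (fun t => Real.iSup_le (fun ht => ?_) hSstar0) hSstar0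
    exact hglobal t (Ioo_subset_Icc_self ht)
  have hSsM : Sstar ≤ A*(M+2*β) := by
    rw [hSstar]; exact mul_le_mul_of_nonneg_left (by linarith) hApos.le
  have hkey : (1+α)*A*(M+2*β) = A*(M+2*β) + α*(A*(M+2*β)) := by ring
  have hlast : α * Sstar ≤ α*(A*(M+2*β)) := mul_le_mul_of_nonneg_left hSsM hα
  linarith
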